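/- For every t ∈ ℤ, the random series E_t + Σ_{k=1}^∞ (C_θ + N_{t−1}D_α + N_t)(C_θ + N_{t−2}D_α + N_{t−1})⋯(C_θ + N_{t−k}D_α + N_{t−k+1}) E_{t−k} converges (absolutely) in ℝ^p almost surely. -/

import Mathlib

open MeasureTheory ProbabilityTheory Matrix Filter Finset
open scoped BigOperators Topology

attribute [local instance] Matrix.frobeniusNormedAddCommGroup

noncomputable section

namespace RCAR

variable {Ω : Type*} [MeasurableSpace Ω]

/-- The companion matrix `C_θ`: first row `θ`, ones on the subdiagonal. -/
def Cmat {p : ℕ} (θ : Fin p → ℝ) : Matrix (Fin p) (Fin p) ℝ :=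
  Matrix.of fun i j => if (i : ℕ) = 0 then θ j else if (i : ℕ) = (j : ℕ) + 1 then 1 else 0

/-- The random matrix `N_t`: first row `(η_{1,t},…,η_{p,t})`, zeros elsewhere. -/
def Nmat {p : ℕ} (η : Fin p → ℤ → Ω → ℝ) (t : ℤ) (ω : Ω) : Matrix (Fin p) (Fin p) ℝ :=
  Matrix.of fun i j => if (i : ℕ) = 0 then η j t ω else 0

/-- The vector `E_t = (ε_t, 0, …, 0)ᵀ`. -/
def Evec {p : ℕ} (ε : ℤ → Ω → ℝ) (t : ℤ) (ω : Ω) : Fin p → ℝ :=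
  fun i => if (i : ℕ) = 0 then ε t ω else 0

/-- The random matrix `A_t = C_θ + N_{t-1} D_α + N_t`. -/
def Amat {p : ℕ} (θ α : Fin p → ℝ) (η : Fin p → ℤ → Ω → ℝ) (t : ℤ) (ω : Ω) :
    Matrix (Fin p) (Fin p) ℝ :=
  Cmat θ + Nmat η (t - 1) ω * Matrix.diagonal α + Nmat η t ω

/-- The ordered product `A_t A_{t-1} ⋯ A_{t-k+1}`. -/
def Aprod {p : ℕ} (θ α : Fin p → ℝ) (η : Fin p → ℤ → Ω → ℝ) (t : ℤ) (k : ℕ) (ω : Ω) :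
    Matrix (Fin p) (Fin p) ℝ :=
  ((List.range k).map fun ℓ => Amat θ α η (t - ℓ) ω).prod

/-- The lag vector `Φ_t`, defined through the causal series. -/
def Phi {p : ℕ} (θ α : Fin p → ℝ) (ε : ℤ → Ω → ℝ) (η : Fin p → ℤ → Ω → ℝ)
    (t : ℤ) (ω : Ω) : Fin p → ℝ :=
  Evec ε t ω + ∑' k : ℕ, Aprod θ α η t (k + 1) ω *ᵥ Evec ε (t - (k + 1)) ω

/-- The RCAR(p) process `X_t`, first coordinate of `Φ_t`. -/
def X {p : ℕ} [NeZero p] (θ α : Fin p → ℝ) (ε : ℤ → Ω → ℝ) (η : Fin p → ℤ → Ω → ℝ)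
    (t : ℤ) (ω : Ω) : ℝ :=
  Phi θ α ε η t ω 0

/-- Basic structural hypotheses on the noises: measurability, i.i.d. within each sequence,
mutual independence of the `p+1` sequences, centering. -/
structure NoiseHypCore {p : ℕ} (μ : Measure Ω) (ε : ℤ → Ω → ℝ)
    (η : Fin p → ℤ → Ω → ℝ) : Prop where
  meas_eps : ∀ t, Measurable (ε t)
  meas_eta : ∀ k t, Measurable (η k t)
  indep_eps : iIndepFun ε μ
  ident_eps : ∀ t, μ.map (ε t) = μ.map (ε 0)
  indep_eta : ∀ k, iIndepFun (η k) μ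
  ident_eta : ∀ k t, μ.map (η k t) = μ.map (η k 0)
  indep_seqs : iIndepFun (β := fun _ : Option (Fin p) => ℤ → ℝ)
      (fun i ω => i.elim (fun t => ε t ω) (fun k t => η k t ω)) μ
  int_eps : Integrable (ε 0) μ
  mean_eps : ∫ ω, ε 0 ω ∂μ = 0
  int_eta : ∀ k, Integrable (η k 0) μ
  mean_eta : ∀ k, ∫ ω, η k 0 ω ∂μ = 0

/-- Noise hypotheses together with vanishing of every existing odd moment. -/
structure NoiseHyp {p : ℕ} (μ : Measure Ω) (ε : ℤ → Ω → ℝ)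
    (η : Fin p → ℤ → Ω → ℝ) extends NoiseHypCore μ ε η : Prop where
  odd_eps : ∀ q : ℕ, Integrable (fun ω => ε 0 ω ^ (2 * q + 1)) μ →
      ∫ ω, ε 0 ω ^ (2 * q + 1) ∂μ = 0
  odd_eta : ∀ k, ∀ q : ℕ, Integrable (fun ω => η k 0 ω ^ (2 * q + 1)) μ →
      ∫ ω, η k 0 ω ^ (2 * q + 1) ∂μ = 0

/-- Contraction condition `E[ln ‖C_θ + N_0 D_α + N_1‖] < 0` (Frobenius norm). -/
def LyapCond {p : ℕ} (μ : Measure Ω) (θ α : Fin p → ℝ)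
    (η : Fin p → ℤ → Ω → ℝ) : Prop :=
  Integrable (fun ω => Real.log ‖Amat θ α η 1 ω‖) μ ∧
    ∫ ω, Real.log ‖Amat θ α η 1 ω‖ ∂μ < 0

/-- Condition `E[ln⁺ |ε_0|] < ∞`. -/
def EpsLogCond (μ : Measure Ω) (ε : ℤ → Ω → ℝ) : Prop :=
  Integrable (fun ω => max (Real.log |ε 0 ω|) 0) μ

/-- Autocovariance `ℓ_i = E[X_i X_0]`. -/
def acov {p : ℕ} [NeZero p] (μ : Measure Ω) (θ α : Fin p → ℝ) (ε : ℤ → Ω → ℝ)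
    (η : Fin p → ℤ → Ω → ℝ) (i : ℕ) : ℝ :=
  ∫ ω, X θ α ε η (i : ℤ) ω * X θ α ε η 0 ω ∂μ

/-- The autocovariance matrix `Λ_0` with entries `ℓ_{|i-j|}`. -/
def Lam0 {p : ℕ} [NeZero p] (μ : Measure Ω) (θ α : Fin p → ℝ) (ε : ℤ → Ω → ℝ)
    (η : Fin p → ℤ → Ω → ℝ) : Matrix (Fin p) (Fin p) ℝ :=
  Matrix.of fun i j => acov μ θ α ε η (((i : ℕ) : ℤ) - ((j : ℕ) : ℤ)).natAbs

/-- The vector `L_1 = (ℓ_1, …, ℓ_p)ᵀ`. -/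
def L1vec {p : ℕ} [NeZero p] (μ : Measure Ω) (θ α : Fin p → ℝ) (ε : ℤ → Ω → ℝ)
    (η : Fin p → ℤ → Ω → ℝ) : Fin p → ℝ :=
  fun i => acov μ θ α ε η ((i : ℕ) + 1)

/-- `S_{n-1} = ∑_{t=0}^{n-1} Φ_t Φ_tᵀ`. -/
def Sprev {p : ℕ} (θ α : Fin p → ℝ) (ε : ℤ → Ω → ℝ) (η : Fin p → ℤ → Ω → ℝ)
    (n : ℕ) (ω : Ω) : Matrix (Fin p) (Fin p) ℝ :=
  ∑ t ∈ Finset.range n, vecMulVec (Phi θ α ε η (t : ℤ) ω) (Phi θ α ε η (t : ℤ) ω)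

/-- `∑_{t=1}^{n} Φ_{t-1} X_t`. -/
def bvec {p : ℕ} [NeZero p] (θ α : Fin p → ℝ) (ε : ℤ → Ω → ℝ) (η : Fin p → ℤ → Ω → ℝ)
    (n : ℕ) (ω : Ω) : Fin p → ℝ :=
  ∑ t ∈ Finset.range n, X θ α ε η ((t : ℤ) + 1) ω • Phi θ α ε η (t : ℤ) ω

/-- The OLS estimator `θ̂_n = S_{n-1}⁻¹ ∑_{t=1}^n Φ_{t-1} X_t`. -/
def thetaHat {p : ℕ} [NeZero p] (θ α : Fin p → ℝ) (ε : ℤ → Ω → ℝ)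
    (η : Fin p → ℤ → Ω → ℝ) (n : ℕ) (ω : Ω) : Fin p → ℝ :=
  (Sprev θ α ε η n ω)⁻¹ *ᵥ bvec θ α ε η n ω

/-- Second-order moment assumption `Θ₂`. -/
def Theta2 {p : ℕ} [NeZero p] (μ : Measure Ω) (θ α : Fin p → ℝ) (ε : ℤ → Ω → ℝ)
    (η : Fin p → ℤ → Ω → ℝ) : Prop :=
  Integrable (fun ω => ε 0 ω ^ 2) μ ∧ (∀ k, Integrable (fun ω => η k 0 ω ^ 4) μ) ∧
    ∀ k, ∀ a : ℕ, a ≤ 2 → Integrable (fun ω => |η k 0 ω| ^ a * X θ α ε η 0 ω ^ 2) μ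

/-- Fourth-order moment assumption `Θ₄`. -/
def Theta4 {p : ℕ} [NeZero p] (μ : Measure Ω) (θ α : Fin p → ℝ) (ε : ℤ → Ω → ℝ)
    (η : Fin p → ℤ → Ω → ℝ) : Prop :=
  Integrable (fun ω => ε 0 ω ^ 4) μ ∧ (∀ k, Integrable (fun ω => η k 0 ω ^ 8) μ) ∧
    ∀ k, ∀ a : ℕ, a ≤ 4 → Integrable (fun ω => |η k 0 ω| ^ a * X θ α ε η 0 ω ^ 4) μ

/-- `τ_{k,2} = E[η_{k,0}²]`. -/
def tau2 {p : ℕ} (μ : Measure Ω) (η : Fin p → ℤ → Ω → ℝ) (k : Fin p) : ℝ :=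
  ∫ ω, η k 0 ω ^ 2 ∂μ

/-- `σ₂ = E[ε_0²]`. -/
def sigma2 (μ : Measure Ω) (ε : ℤ → Ω → ℝ) : ℝ :=
  ∫ ω, ε 0 ω ^ 2 ∂μ

/-- `β₁ = α₁ τ_{1,2}`. -/
def beta1 {p : ℕ} [NeZero p] (μ : Measure Ω) (α : Fin p → ℝ)
    (η : Fin p → ℤ → Ω → ℝ) : ℝ :=
  α 0 * tau2 μ η 0

/-- `β₂ = α₂ τ_{2,2} + ⋯ + α_p τ_{p,2}`. -/
def beta2 {p : ℕ} (μ : Measure Ω) (α : Fin p → ℝ) (η : Fin p → ℤ → Ω → ℝ) : ℝ :=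
  ∑ k : Fin p, if (k : ℕ) = 0 then 0 else α k * tau2 μ η k

/-- `θ` extended by zero (`thext θ m` is the 1-based coefficient `θ_{m+1}`). -/
def thext {p : ℕ} (θ : Fin p → ℝ) (m : ℕ) : ℝ :=
  if h : m < p then θ ⟨m, h⟩ else 0

/-- The matrix `M_θ` (Toeplitz part plus Hankel part). -/
def Mtheta {p : ℕ} (θ : Fin p → ℝ) : Matrix (Fin p) (Fin p) ℝ :=
  Matrix.of fun i j =>
    (if (j : ℕ) ≤ (i : ℕ) then thext θ ((i : ℕ) - (j : ℕ)) else 0) +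
      (if 1 ≤ (j : ℕ) then thext θ ((i : ℕ) + (j : ℕ)) else 0)

/-- The matrix `B` with `B_{1,2} = β₂` and subdiagonal entries `β₁`. -/
def Bmat {p : ℕ} [NeZero p] (μ : Measure Ω) (α : Fin p → ℝ)
    (η : Fin p → ℤ → Ω → ℝ) : Matrix (Fin p) (Fin p) ℝ :=
  Matrix.of fun i j =>
    if (i : ℕ) = 0 ∧ (j : ℕ) = 1 then beta2 μ α η
    else if (i : ℕ) = (j : ℕ) + 1 then beta1 μ α η else 0

/-- The matrix `M_{α,β} = diag(1/(1-2β₁),1,…,1)(M_θ + B)`. -/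
def Mab {p : ℕ} [NeZero p] (μ : Measure Ω) (θ α : Fin p → ℝ)
    (η : Fin p → ℤ → Ω → ℝ) : Matrix (Fin p) (Fin p) ℝ :=
  Matrix.diagonal (fun i : Fin p => if (i : ℕ) = 0 then 1 / (1 - 2 * beta1 μ α η) else 1) *
    (Mtheta θ + Bmat μ α η)

/-- `U₀`: first column of `M_{α,β}`. -/
def U0 {p : ℕ} [NeZero p] (μ : Measure Ω) (θ α : Fin p → ℝ)
    (η : Fin p → ℤ → Ω → ℝ) : Fin p → ℝ :=
  fun i => Mab μ θ α η i 0

/-- `K`: the last `p-1` columns of `M_{α,β}` followed by a zero column. -/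
def Kmat {p : ℕ} [NeZero p] (μ : Measure Ω) (θ α : Fin p → ℝ)
    (η : Fin p → ℤ → Ω → ℝ) : Matrix (Fin p) (Fin p) ℝ :=
  Matrix.of fun i j =>
    if h : (j : ℕ) + 1 < p then Mab μ θ α η i ⟨(j : ℕ) + 1, h⟩ else 0

/-- The scalar `s₀`. -/
def s0 {p : ℕ} [NeZero p] (μ : Measure Ω) (θ α : Fin p → ℝ) (ε : ℤ → Ω → ℝ)
    (η : Fin p → ℤ → Ω → ℝ) : ℝ :=
  (1 + α 0 * thext θ 1 + 2 * α 0 * thext θ 0 ^ 2 / (1 - 2 * beta1 μ α η) +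
      sigma2 μ ε / (1 - α 0 * beta1 μ α η)) * tau2 μ η 0 +
    ∑ k : Fin p, if (k : ℕ) = 0 then 0 else (1 + α k ^ 2) * tau2 μ η k

/-- The filtration `F*_n = σ(Φ_0, η_{·,0}, (ε_s, η_{·,s}), 1 ≤ s ≤ n)`. -/
def Fstar {p : ℕ} (θ α : Fin p → ℝ) (ε : ℤ → Ω → ℝ) (η : Fin p → ℤ → Ω → ℝ)
    (n : ℕ) : MeasurableSpace Ω :=
  MeasurableSpace.comap (fun ω => (Phi θ α ε η 0 ω, fun k : Fin p => η k 0 ω)) inferInstance ⊔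
    ⨆ s ∈ Finset.Icc 1 n,
      MeasurableSpace.comap (fun ω => (ε (s : ℤ) ω, fun k : Fin p => η k (s : ℤ) ω)) inferInstance

/-- `M` is a martingale with respect to the family of σ-algebras `F`. -/
def IsMartingaleWRT {E : Type*} [NormedAddCommGroup E] [NormedSpace ℝ E] [CompleteSpace E]
    (μ : Measure Ω) (F : ℕ → MeasurableSpace Ω) (M : ℕ → Ω → E) : Prop :=
  (∀ n, StronglyMeasurable[F n] (M n)) ∧ (∀ n, Integrable (M n) μ) ∧
    ∀ n, μ[M (n + 1)|F n] =ᵐ[μ] M n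

/-- A remainder process `R` with `‖R_n‖ = o(√n)` almost surely. -/
def Negligible {E : Type*} [NormedAddCommGroup E] (μ : Measure Ω) (R : ℕ → Ω → E) : Prop :=
  ∀ᵐ ω ∂μ, Tendsto (fun n : ℕ => ‖R n ω‖ / Real.sqrt n) atTop (𝓝 0)

/-- `U = (u_1,…,u_{p-1},0)ᵀ` realizes the martingale decomposition of `∑ X_t²`
(the conclusion of Lemma A.4). -/
def UDecomp {p : ℕ} [NeZero p] (μ : Measure Ω) (θ α : Fin p → ℝ) (ε : ℤ → Ω → ℝ)
    (η : Fin p → ℤ → Ω → ℝ) (U : Fin p → ℝ) : Prop :=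
  (∀ i : Fin p, (i : ℕ) = p - 1 → U i = 0) ∧
    ∃ M R : ℕ → Ω → ℝ, IsMartingaleWRT μ (Fstar θ α ε η) M ∧ Negligible μ R ∧
      ∀ᵐ ω ∂μ, ∀ n : ℕ, 1 ≤ n →
        ∑ t ∈ Finset.range n, X θ α ε η ((t : ℤ) + 1) ω ^ 2 =
          (U ⬝ᵥ bvec θ α ε η n ω) / (1 - s0 μ θ α ε η) +
            (acov μ θ α ε η 0 - U ⬝ᵥ L1vec μ θ α ε η / (1 - s0 μ θ α ε η)) * n +
            M n ω + R n ω

/-! ### Auxiliary material for the summability theorem -/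

section Aux

variable {Ω₀ : Type*} [MeasurableSpace Ω₀] {p : ℕ}

/-- The pair of noise rows at times `s-1` and `s`. -/
def pairFun (η : Fin p → ℤ → Ω₀ → ℝ) (s : ℤ) (ω : Ω₀) : (Fin p → ℝ) × (Fin p → ℝ) :=
  (fun k => η k (s - 1) ω, fun k => η k s ω)

/-- The matrix `A` as a function of the pair of noise rows. -/
def entryFun (θ α : Fin p → ℝ) (uv : (Fin p → ℝ) × (Fin p → ℝ)) : Matrix (Fin p) (Fin p) ℝ :=
  Matrix.of fun i j =>
    Cmat θ i j + (if (i : ℕ) = 0 then (1:ℝ) else 0) * uv.1 j * α j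
      + (if (i : ℕ) = 0 then (1:ℝ) else 0) * uv.2 j

lemma Amat_eq_entryFun {θ α : Fin p → ℝ} {η : Fin p → ℤ → Ω₀ → ℝ} (s : ℤ) (ω : Ω₀) :
    Amat θ α η s ω = entryFun θ α (pairFun η s ω) := by
  ext i j
  simp [Amat, entryFun, pairFun, Nmat, Matrix.add_apply, Matrix.mul_diagonal, ite_mul]

/-- `log` of the Frobenius norm, as a function of the noise pair. -/
def lognormFun (θ α : Fin p → ℝ) (uv : (Fin p → ℝ) × (Fin p → ℝ)) : ℝ :=
  Real.log (Real.sqrt (∑ i, ∑ j, (entryFun θ α uv i j) ^ 2))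

lemma lognormFun_eq {θ α : Fin p → ℝ} {η : Fin p → ℤ → Ω₀ → ℝ} (s : ℤ) (ω : Ω₀) :
    Real.log ‖Amat θ α η s ω‖ = lognormFun θ α (pairFun η s ω) := by
  rw [Amat_eq_entryFun (θ := θ) (α := α) s ω, lognormFun]
  congr 1
  rw [Matrix.frobenius_norm_def, Real.sqrt_eq_rpow]
  congr 1
  refine Finset.sum_congr rfl fun i _ => Finset.sum_congr rfl fun j _ => ?_
  rw [show (2:ℝ) = ((2:ℕ):ℝ) by norm_num, Real.rpow_natCast, Real.norm_eq_abs, sq_abs]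

lemma measurable_lognormFun (θ α : Fin p → ℝ) : Measurable (lognormFun θ α) := by
  apply Real.measurable_log.comp
  apply Real.continuous_sqrt.measurable.comp
  refine Finset.measurable_sum _ fun i _ => Finset.measurable_sum _ fun j _ => ?_
  have h1 : Measurable fun uv : (Fin p → ℝ) × (Fin p → ℝ) => uv.1 j :=
    (measurable_pi_apply j).comp measurable_fst
  have h2 : Measurable fun uv : (Fin p → ℝ) × (Fin p → ℝ) => uv.2 j :=
    (measurable_pi_apply j).comp measurable_snd
  apply Measurable.pow_const
  exact ((measurable_const.add (((h1.const_mul _).mul_const _))).add (h2.const_mul _))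

lemma measurable_pairFun {η : Fin p → ℤ → Ω₀ → ℝ} (h : ∀ k t, Measurable (η k t)) (s : ℤ) :
    Measurable (pairFun η s) :=
  (measurable_pi_lambda _ fun k => h k _).prodMk (measurable_pi_lambda _ fun k => h k _)

/-- Entrywise bound by the Frobenius norm. -/
lemma entry_le_frobenius (A : Matrix (Fin p) (Fin p) ℝ) (i j : Fin p) : |A i j| ≤ ‖A‖ := by
  rw [Matrix.frobenius_norm_def]
  have h1 : |A i j| = (|A i j| ^ (2:ℝ)) ^ (1/2 : ℝ) := by
    rw [← Real.rpow_mul (abs_nonneg _)]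
    norm_num
  rw [h1]
  apply Real.rpow_le_rpow (by positivity) _ (by norm_num)
  calc |A i j| ^ (2:ℝ) = ‖A i j‖ ^ (2:ℝ) := by rw [Real.norm_eq_abs]
    _ ≤ ∑ j', ‖A i j'‖ ^ (2:ℝ) := by
        apply Finset.single_le_sum (f := fun j' => ‖A i j'‖ ^ (2:ℝ))
          (fun j' _ => by positivity) (Finset.mem_univ j)
    _ ≤ ∑ i', ∑ j', ‖A i' j'‖ ^ (2:ℝ) := by
        apply Finset.single_le_sum (f := fun i' => ∑ j', ‖A i' j'‖ ^ (2:ℝ))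
          (fun i' _ => by positivity) (Finset.mem_univ i)

/-- Product of nonnegative reals is at most `exp` of the sum of logs. -/
lemma prod_le_exp_sum_log {ι : Type*} (s : Finset ι) (f : ι → ℝ) (hf : ∀ i ∈ s, 0 ≤ f i) :
    ∏ i ∈ s, f i ≤ Real.exp (∑ i ∈ s, Real.log (f i)) := by
  classical
  induction s using Finset.induction with
  | empty => simp
  | @insert a s' hx ih =>
    rw [Finset.prod_insert hx, Finset.sum_insert hx, Real.exp_add]
    have hfa : 0 ≤ f a := hf a (Finset.mem_insert_self a s')
    have hrest : ∏ i ∈ s', f i ≤ Real.exp (∑ i ∈ s', Real.log (f i)) :=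
      ih fun i hi => hf i (Finset.mem_insert_of_mem hi)
    have hprod_nonneg : 0 ≤ ∏ i ∈ s', f i := Finset.prod_nonneg fun i hi =>
      hf i (Finset.mem_insert_of_mem hi)
    rcases eq_or_lt_of_le hfa with h0 | hpos
    · rw [← h0, zero_mul]; positivity
    · have : f a ≤ Real.exp (Real.log (f a)) := le_of_eq (Real.exp_log hpos).symm
      exact mul_le_mul this hrest hprod_nonneg (le_of_lt (Real.exp_pos _))

lemma abs_le_exp_maxlog (x : ℝ) : |x| ≤ Real.exp (max (Real.log |x|) 0) := by
  rcases eq_or_lt_of_le (abs_nonneg x) with h0 | hpos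
  · rw [← h0]; positivity
  · calc |x| = Real.exp (Real.log |x|) := (Real.exp_log hpos).symm
      _ ≤ _ := Real.exp_le_exp.2 (le_max_left _ _)

/-- Norm bound for the product matrix. -/
lemma Aprod_norm_le {θ α : Fin p → ℝ} {η : Fin p → ℤ → Ω₀ → ℝ} (t : ℤ) (k : ℕ) (ω : Ω₀) :
    ‖Aprod θ α η t (k + 1) ω‖ ≤ ∏ ℓ ∈ Finset.range (k + 1), ‖Amat θ α η (t - ℓ) ω‖ := by
  induction k with
  | zero => simp [Aprod, List.range_succ]
  | succ n ih =>
    have hsplit : Aprod θ α η t (n + 2) ω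
        = Aprod θ α η t (n + 1) ω * Amat θ α η (t - ((n + 1 : ℕ) : ℤ)) ω := by
      unfold Aprod
      rw [List.range_succ]
      simp
    rw [hsplit, Finset.prod_range_succ]
    calc ‖Aprod θ α η t (n + 1) ω * Amat θ α η (t - (n + 1 : ℕ)) ω‖
        ≤ ‖Aprod θ α η t (n + 1) ω‖ * ‖Amat θ α η (t - (n + 1 : ℕ)) ω‖ :=
          Matrix.frobenius_norm_mul _ _
      _ ≤ (∏ ℓ ∈ Finset.range (n + 1), ‖Amat θ α η (t - ℓ) ω‖) *
            ‖Amat θ α η (t - (n + 1 : ℕ)) ω‖ := by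
          apply mul_le_mul_of_nonneg_right ih (norm_nonneg _)

/-- Pointwise bound on the summand. -/
lemma term_norm_le {θ α : Fin p → ℝ} {ε : ℤ → Ω₀ → ℝ} {η : Fin p → ℤ → Ω₀ → ℝ}
    [NeZero p] (t : ℤ) (k : ℕ) (ω : Ω₀) :
    ‖Aprod θ α η t (k + 1) ω *ᵥ Evec ε (t - (k + 1)) ω‖ ≤
      (∏ ℓ ∈ Finset.range (k + 1), ‖Amat θ α η (t - ℓ) ω‖) * |ε (t - (k + 1)) ω| := by
  have hC : 0 ≤ (∏ ℓ ∈ Finset.range (k + 1), ‖Amat θ α η (t - ℓ) ω‖) * |ε (t - (k + 1)) ω| := by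
    positivity
  rw [pi_norm_le_iff_of_nonneg hC]
  intro i
  have hcoord : (Aprod θ α η t (k + 1) ω *ᵥ Evec ε (t - (k + 1)) ω) i
      = Aprod θ α η t (k + 1) ω i 0 * ε (t - (k + 1)) ω := by
    simp only [Matrix.mulVec, dotProduct, Evec, mul_ite, mul_zero]
    have hv : ∀ j : Fin p, ((j:ℕ) = 0) = (j = (0:Fin p)) := fun j => by
      rw [Fin.ext_iff, Fin.val_zero]
    simp_rw [hv]
    simp [Finset.sum_ite_eq']
  rw [hcoord, Real.norm_eq_abs, abs_mul]
  apply mul_le_mul _ le_rfl (abs_nonneg _) (Finset.prod_nonneg fun _ _ => norm_nonneg _)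
  exact (entry_le_frobenius _ _ _).trans (Aprod_norm_le t k ω)

variable {μ : Measure Ω₀} [IsProbabilityMeasure μ] {ε : ℤ → Ω₀ → ℝ} {η : Fin p → ℤ → Ω₀ → ℝ}

/-- The doubly-indexed noise family is jointly independent. -/
lemma eta_iIndep (hn : NoiseHypCore μ ε η) :
    iIndepFun (fun (i : Fin p × ℤ) ω => η i.1 i.2 ω) μ := by
  classical
  rw [iIndepFun_iff_measure_inter_preimage_eq_mul]
  intro S sets hsets
  set T : Fin p → Finset ℤ := fun k => (S.filter fun i => i.1 = k).image Prod.snd with hT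
  have hmemT : ∀ k s, s ∈ T k ↔ (k, s) ∈ S := by
    intro k s
    simp only [hT, Finset.mem_image, Finset.mem_filter]
    constructor
    · rintro ⟨⟨k', s'⟩, ⟨hS, rfl⟩, rfl⟩
      exact hS
    · intro h
      exact ⟨(k, s), ⟨h, rfl⟩, rfl⟩
  set G : Fin p → Set (ℤ → ℝ) := fun k => ⋂ s ∈ T k, (fun x : ℤ → ℝ => x s) ⁻¹' sets (k, s)
    with hG
  have hGmeas : ∀ k, MeasurableSet (G k) := fun k =>
    MeasurableSet.biInter (Finset.countable_toSet _) fun s hs =>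
      (measurable_pi_apply s) (hsets _ ((hmemT k s).1 hs))
  have hdecomp : (⋂ i ∈ S, (fun ω => η i.1 i.2 ω) ⁻¹' sets i)
      = ⋂ k ∈ (Finset.univ : Finset (Fin p)), (fun ω (u : ℤ) => η k u ω) ⁻¹' G k := by
    ext ω
    simp only [Set.mem_iInter, Set.mem_preimage, hG]
    constructor
    · intro h k _ s hs
      exact h (k, s) ((hmemT k s).1 hs)
    · rintro h ⟨k, s⟩ hi
      exact h k (Finset.mem_univ k) s ((hmemT k s).2 hi)
  have hrows := hn.indep_seqs.measure_inter_preimage_eq_mul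
    (S := Finset.univ.image Option.some)
    (sets := fun o => Option.elim o Set.univ G) ?_
  swap
  · intro o ho
    rcases Finset.mem_image.1 ho with ⟨k, -, rfl⟩
    exact hGmeas k
  rw [Finset.set_biInter_finset_image, Finset.prod_image
    (fun x _ y _ h => Option.some.inj h)] at hrows
  simp only [Option.elim] at hrows
  have hrowk : ∀ k : Fin p, μ ((fun ω (u : ℤ) => η k u ω) ⁻¹' G k)
      = ∏ s ∈ T k, μ ((fun ω => η k s ω) ⁻¹' sets (k, s)) := by
    intro k
    have hpre : (fun ω (u : ℤ) => η k u ω) ⁻¹' G k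
        = ⋂ s ∈ T k, (fun ω => η k s ω) ⁻¹' sets (k, s) := by
      ext ω; simp [hG]
    rw [hpre]
    exact (hn.indep_eta k).measure_inter_preimage_eq_mul (S := T k)
      (sets := fun s => sets (k, s)) (fun s hs => hsets _ ((hmemT k s).1 hs))
  have hfiber : ∀ k : Fin p, ∏ s ∈ T k, μ ((fun ω => η k s ω) ⁻¹' sets (k, s))
      = ∏ i ∈ S.filter (fun i => i.1 = k), μ ((fun ω => η i.1 i.2 ω) ⁻¹' sets i) := by
    intro k
    rw [hT]
    rw [Finset.prod_image ?_]
    · refine Finset.prod_congr rfl fun i hi => ?_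
      obtain ⟨i1, i2⟩ := i
      obtain ⟨-, rfl⟩ := Finset.mem_filter.1 hi
      rfl
    · rintro ⟨x1, x2⟩ hx ⟨y1, y2⟩ hy h
      obtain ⟨-, rfl⟩ := Finset.mem_filter.1 hx
      obtain ⟨-, rfl⟩ := Finset.mem_filter.1 hy
      simp only at h
      rw [h]
  calc μ (⋂ i ∈ S, (fun ω => η i.1 i.2 ω) ⁻¹' sets i)
      = μ (⋂ k ∈ (Finset.univ : Finset (Fin p)), (fun ω (u : ℤ) => η k u ω) ⁻¹' G k) := by
        rw [hdecomp]
    _ = ∏ k : Fin p, μ ((fun ω (u : ℤ) => η k u ω) ⁻¹' G k) := hrows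
    _ = ∏ k : Fin p, ∏ i ∈ S.filter (fun i => i.1 = k),
          μ ((fun ω => η i.1 i.2 ω) ⁻¹' sets i) := by
        refine Finset.prod_congr rfl fun k _ => ?_
        rw [hrowk k, hfiber k]
    _ = ∏ i ∈ S, μ ((fun ω => η i.1 i.2 ω) ⁻¹' sets i) :=
        Finset.prod_fiberwise S Prod.fst _

/-- The law of the noise row at any fixed time is the product of the marginals. -/
lemma map_eta_row (hn : NoiseHypCore μ ε η) (c : ℤ) :
    μ.map (fun ω (k : Fin p) => η k c ω) = Measure.pi (fun k : Fin p => μ.map (η k 0)) := by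
  classical
  haveI : ∀ k : Fin p, IsProbabilityMeasure (μ.map (η k 0)) :=
    fun k => Measure.isProbabilityMeasure_map (hn.meas_eta k 0).aemeasurable
  refine (Measure.pi_eq fun s hs => ?_).symm
  rw [Measure.map_apply (measurable_pi_lambda _ fun k => hn.meas_eta k c)
    (MeasurableSet.univ_pi hs)]
  have hpre : (fun ω (k : Fin p) => η k c ω) ⁻¹' Set.pi Set.univ s
      = ⋂ i ∈ Finset.univ.image (fun k : Fin p => (k, c)),
          (fun ω => η i.1 i.2 ω) ⁻¹' s i.1 := by
    rw [Finset.set_biInter_finset_image]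
    ext ω
    simp [Set.mem_pi]
  rw [hpre, (eta_iIndep hn).measure_inter_preimage_eq_mul
    (S := Finset.univ.image fun k : Fin p => (k, c))
    (sets := fun i => s i.1) (fun i _ => hs i.1),
    Finset.prod_image (fun x _ y _ h => by simpa using congrArg Prod.fst h)]
  refine Finset.prod_congr rfl fun k _ => ?_
  rw [← Measure.map_apply (hn.meas_eta k c) (hs k), hn.ident_eta k c]

/-- The joint law of the noise pair is time-invariant. -/
lemma map_pairFun (hn : NoiseHypCore μ ε η) (s : ℤ) :
    μ.map (pairFun η s) =
      (Measure.pi fun k : Fin p => μ.map (η k 0)).prod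
        (Measure.pi fun k : Fin p => μ.map (η k 0)) := by
  classical
  haveI : ∀ k : Fin p, IsProbabilityMeasure (μ.map (η k 0)) :=
    fun k => Measure.isProbabilityMeasure_map (hn.meas_eta k 0).aemeasurable
  have hf : Measurable (fun ω (k : Fin p) => η k (s - 1) ω) :=
    measurable_pi_lambda _ fun k => hn.meas_eta k _
  have hg : Measurable (fun ω (k : Fin p) => η k s ω) :=
    measurable_pi_lambda _ fun k => hn.meas_eta k _
  have hdisj : Disjoint (Finset.univ.image fun k : Fin p => (k, s - 1))
      (Finset.univ.image fun k : Fin p => (k, s)) := by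
    rw [Finset.disjoint_left]
    rintro ⟨k, c⟩ h1 h2
    simp only [Finset.mem_image, Finset.mem_univ, true_and, Prod.mk.injEq] at h1 h2
    obtain ⟨k1, -, e1⟩ := h1
    obtain ⟨k2, -, e2⟩ := h2
    omega
  have h0 := (eta_iIndep hn).indepFun_finset _ _ hdisj (fun i => hn.meas_eta i.1 i.2)
  have hm1 : ∀ k : Fin p, (k, s - 1) ∈ Finset.univ.image (fun k : Fin p => (k, s - 1)) :=
    fun k => Finset.mem_image_of_mem _ (Finset.mem_univ k)
  have hm2 : ∀ k : Fin p, (k, s) ∈ Finset.univ.image (fun k : Fin p => (k, s)) :=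
    fun k => Finset.mem_image_of_mem _ (Finset.mem_univ k)
  have hφ1 : Measurable (fun v : (i : Finset.univ.image (fun k : Fin p => (k, s - 1))) → ℝ =>
      fun k : Fin p => v ⟨(k, s - 1), hm1 k⟩) :=
    measurable_pi_lambda _ fun k => measurable_pi_apply _
  have hφ2 : Measurable (fun v : (i : Finset.univ.image (fun k : Fin p => (k, s))) → ℝ =>
      fun k : Fin p => v ⟨(k, s), hm2 k⟩) :=
    measurable_pi_lambda _ fun k => measurable_pi_apply _
  have hindep : IndepFun (fun ω (k : Fin p) => η k (s - 1) ω)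
      (fun ω (k : Fin p) => η k s ω) μ := h0.comp hφ1 hφ2
  have := (indepFun_iff_map_prod_eq_prod_map_map hf.aemeasurable hg.aemeasurable).1 hindep
  rw [map_eta_row hn (s - 1), map_eta_row hn s] at this
  exact this

lemma identDistrib_pairFun (hn : NoiseHypCore μ ε η) (s s' : ℤ) :
    IdentDistrib (pairFun η s) (pairFun η s') μ μ :=
  ⟨(measurable_pairFun hn.meas_eta s).aemeasurable,
    (measurable_pairFun hn.meas_eta s').aemeasurable,
    by rw [map_pairFun hn s, map_pairFun hn s']⟩

lemma identDistrib_lognorm (hn : NoiseHypCore μ ε η) (θ α : Fin p → ℝ) (s s' : ℤ) :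
    IdentDistrib (fun ω => Real.log ‖Amat θ α η s ω‖)
      (fun ω => Real.log ‖Amat θ α η s' ω‖) μ μ := by
  have h := (identDistrib_pairFun hn s s').comp (measurable_lognormFun θ α)
  have e1 : (lognormFun θ α ∘ pairFun η s) = fun ω => Real.log ‖Amat θ α η s ω‖ :=
    funext fun ω => (lognormFun_eq s ω).symm
  have e2 : (lognormFun θ α ∘ pairFun η s') = fun ω => Real.log ‖Amat θ α η s' ω‖ :=
    funext fun ω => (lognormFun_eq s' ω).symm
  rwa [e1, e2] at h

lemma indepFun_lognorm (hn : NoiseHypCore μ ε η) (θ α : Fin p → ℝ) (s s' : ℤ)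
    (hss : s' + 1 < s ∨ s + 1 < s') :
    IndepFun (fun ω => Real.log ‖Amat θ α η s ω‖)
      (fun ω => Real.log ‖Amat θ α η s' ω‖) μ := by
  classical
  set S1 : Finset (Fin p × ℤ) :=
    Finset.univ.image (fun k : Fin p => (k, s - 1)) ∪
      Finset.univ.image (fun k : Fin p => (k, s)) with hS1
  set S2 : Finset (Fin p × ℤ) :=
    Finset.univ.image (fun k : Fin p => (k, s' - 1)) ∪
      Finset.univ.image (fun k : Fin p => (k, s')) with hS2
  have hdisj : Disjoint S1 S2 := by
    rw [Finset.disjoint_left]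
    rintro ⟨k, c⟩ h1 h2
    simp only [hS1, hS2, Finset.mem_union, Finset.mem_image, Finset.mem_univ, true_and,
      Prod.mk.injEq] at h1 h2
    rcases h1 with ⟨k1, -, e1⟩ | ⟨k1, -, e1⟩ <;> rcases h2 with ⟨k2, -, e2⟩ | ⟨k2, -, e2⟩ <;>
      omega
  have h0 := (eta_iIndep hn).indepFun_finset S1 S2 hdisj (fun i => hn.meas_eta i.1 i.2)
  have hm1 : ∀ k : Fin p, (k, s - 1) ∈ S1 := fun k =>
    Finset.mem_union_left _ (Finset.mem_image_of_mem _ (Finset.mem_univ k))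
  have hm1' : ∀ k : Fin p, (k, s) ∈ S1 := fun k =>
    Finset.mem_union_right _ (Finset.mem_image_of_mem _ (Finset.mem_univ k))
  have hm2 : ∀ k : Fin p, (k, s' - 1) ∈ S2 := fun k =>
    Finset.mem_union_left _ (Finset.mem_image_of_mem _ (Finset.mem_univ k))
  have hm2' : ∀ k : Fin p, (k, s') ∈ S2 := fun k =>
    Finset.mem_union_right _ (Finset.mem_image_of_mem _ (Finset.mem_univ k))
  set φ1 : ((i : S1) → ℝ) → ℝ := fun v =>
    lognormFun θ α (fun k : Fin p => v ⟨(k, s - 1), hm1 k⟩,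
      fun k : Fin p => v ⟨(k, s), hm1' k⟩) with hφ1def
  set φ2 : ((i : S2) → ℝ) → ℝ := fun v =>
    lognormFun θ α (fun k : Fin p => v ⟨(k, s' - 1), hm2 k⟩,
      fun k : Fin p => v ⟨(k, s'), hm2' k⟩) with hφ2def
  have hφ1 : Measurable φ1 :=
    (measurable_lognormFun θ α).comp
      ((measurable_pi_lambda _ fun k => measurable_pi_apply _).prodMk
        (measurable_pi_lambda _ fun k => measurable_pi_apply _))
  have hφ2 : Measurable φ2 :=
    (measurable_lognormFun θ α).comp
      ((measurable_pi_lambda _ fun k => measurable_pi_apply _).prodMk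
        (measurable_pi_lambda _ fun k => measurable_pi_apply _))
  have h1 := h0.comp hφ1 hφ2
  have e1 : (φ1 ∘ fun a (i : S1) => η (i : Fin p × ℤ).1 (i : Fin p × ℤ).2 a)
      = fun ω => Real.log ‖Amat θ α η s ω‖ :=
    funext fun ω => (lognormFun_eq s ω).symm
  have e2 : (φ2 ∘ fun a (i : S2) => η (i : Fin p × ℤ).1 (i : Fin p × ℤ).2 a)
      = fun ω => Real.log ‖Amat θ α η s' ω‖ :=
    funext fun ω => (lognormFun_eq s' ω).symm
  rwa [e1, e2] at h1

lemma sum_range_even_odd (f : ℕ → ℝ) (n : ℕ) :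
    ∑ ℓ ∈ Finset.range (2 * n), f ℓ
      = ∑ i ∈ Finset.range n, f (2 * i) + ∑ i ∈ Finset.range n, f (2 * i + 1) := by
  induction n with
  | zero => simp
  | succ n ih =>
    have h2 : 2 * (n + 1) = 2 * n + 1 + 1 := by ring
    rw [h2, Finset.sum_range_succ, Finset.sum_range_succ, ih, Finset.sum_range_succ,
      Finset.sum_range_succ]
    ring

lemma sum_even_odd_le (L E O : ℕ → ℝ) (hE2 : ∀ i, L (2 * i) = E i)
    (hO2 : ∀ i, L (2 * i + 1) = O i) (c : ℝ) (N1 N2 : ℕ)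
    (hE : ∀ n, N1 ≤ n → ∑ i ∈ Finset.range n, E i ≤ c * n)
    (hO : ∀ n, N2 ≤ n → ∑ i ∈ Finset.range n, O i ≤ c * n)
    (K : ℕ) (hK : 2 * N1 + 2 * N2 + 2 ≤ K) :
    ∑ ℓ ∈ Finset.range K, L ℓ ≤ c * K := by
  rcases Nat.even_or_odd K with ⟨n, hn⟩ | ⟨n, hn⟩
  · have hKn : K = 2 * n := by omega
    subst hKn
    rw [sum_range_even_odd]
    have h1 := hE n (by omega)
    have h2 := hO n (by omega)
    have hsum : ∑ i ∈ Finset.range n, L (2 * i) = ∑ i ∈ Finset.range n, E i :=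
      Finset.sum_congr rfl fun i _ => hE2 i
    have hsum2 : ∑ i ∈ Finset.range n, L (2 * i + 1) = ∑ i ∈ Finset.range n, O i :=
      Finset.sum_congr rfl fun i _ => hO2 i
    rw [hsum, hsum2]
    have hcast : ((2 * n : ℕ) : ℝ) = (n : ℝ) + (n : ℝ) := by push_cast; ring
    rw [hcast]
    linarith
  · have hKn : K = 2 * n + 1 := by omega
    subst hKn
    rw [Finset.sum_range_succ, sum_range_even_odd]
    have hsum : ∑ i ∈ Finset.range n, L (2 * i) = ∑ i ∈ Finset.range n, E i :=
      Finset.sum_congr rfl fun i _ => hE2 i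
    have hsum2 : ∑ i ∈ Finset.range n, L (2 * i + 1) = ∑ i ∈ Finset.range n, O i :=
      Finset.sum_congr rfl fun i _ => hO2 i
    have h1 := hE (n + 1) (by omega)
    have h2 := hO n (by omega)
    rw [Finset.sum_range_succ] at h1
    rw [hsum, hsum2, hE2 n]
    have hcast : ((2 * n + 1 : ℕ) : ℝ) = ((n : ℝ) + 1) + (n : ℝ) := by push_cast; ring
    rw [hcast]
    push_cast at h1
    linarith

end Aux

theorem rcar_causal_series_summable {Ω : Type*} [MeasurableSpace Ω] {p : ℕ} [NeZero p]
    (μ : Measure Ω) [IsProbabilityMeasure μ] (θ α : Fin p → ℝ)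
    (ε : ℤ → Ω → ℝ) (η : Fin p → ℤ → Ω → ℝ)
    (hnoise : NoiseHyp μ ε η) (hlyap : LyapCond μ θ α η) (heps : EpsLogCond μ ε)
    (t : ℤ) :
    ∀ᵐ ω ∂μ, Summable fun k : ℕ => Aprod θ α η t (k + 1) ω *ᵥ Evec ε (t - (k + 1)) ω := by
  classical
  obtain ⟨hlint, hlneg⟩ := hlyap
  have hn := hnoise.toNoiseHypCore
  set m : ℝ := ∫ ω, Real.log ‖Amat θ α η 1 ω‖ ∂μ with hm
  have hmneg : m < 0 := hlneg
  set δ : ℝ := -m / 8 with hδ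
  have hδpos : 0 < δ := by rw [hδ]; linarith
  set c : ℝ := m + δ with hc
  have hcneg : c < 0 := by rw [hc, hδ]; linarith
  have hmc : m < c := by rw [hc]; linarith
  -- even / odd strong laws for the matrix norms
  set Xe : ℕ → Ω → ℝ := fun i ω => Real.log ‖Amat θ α η (t - 2 * (i : ℤ)) ω‖ with hXe
  set Xo : ℕ → Ω → ℝ := fun i ω => Real.log ‖Amat θ α η (t - 2 * (i : ℤ) - 1) ω‖ with hXo
  have hident_e : ∀ i, IdentDistrib (Xe i) (Xe 0) μ μ := fun i =>
    identDistrib_lognorm hn θ α _ _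
  have hident_o : ∀ i, IdentDistrib (Xo i) (Xo 0) μ μ := fun i =>
    identDistrib_lognorm hn θ α _ _
  have hint_e : Integrable (Xe 0) μ :=
    (identDistrib_lognorm hn θ α (t - 2 * ((0 : ℕ) : ℤ)) 1).integrable_iff.2 hlint
  have hint_o : Integrable (Xo 0) μ :=
    (identDistrib_lognorm hn θ α (t - 2 * ((0 : ℕ) : ℤ) - 1) 1).integrable_iff.2 hlint
  have hindep_e : Pairwise (Function.onFun (IndepFun · · μ) Xe) := fun i j hij =>
    indepFun_lognorm hn θ α _ _ (by omega)
  have hindep_o : Pairwise (Function.onFun (IndepFun · · μ) Xo) := fun i j hij =>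
    indepFun_lognorm hn θ α _ _ (by omega)
  have hEe : μ[Xe 0] = m := by
    rw [hm]; exact (identDistrib_lognorm hn θ α _ 1).integral_eq
  have hEo : μ[Xo 0] = m := by
    rw [hm]; exact (identDistrib_lognorm hn θ α _ 1).integral_eq
  have hlim_e := strong_law_ae_real Xe hint_e hindep_e hident_e
  have hlim_o := strong_law_ae_real Xo hint_o hindep_o hident_o
  rw [hEe] at hlim_e
  rw [hEo] at hlim_o
  -- strong law for the noise logs
  set g0 : ℝ → ℝ := fun x => max (Real.log |x|) 0 with hg0
  have hgmeas : Measurable g0 := (Real.measurable_log.comp measurable_abs).max measurable_const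
  have hidenteps : ∀ a b : ℤ, IdentDistrib (ε a) (ε b) μ μ := fun a b =>
    ⟨(hn.meas_eps a).aemeasurable, (hn.meas_eps b).aemeasurable,
      by rw [hn.ident_eps a, hn.ident_eps b]⟩
  set Y : ℕ → Ω → ℝ := fun k ω => g0 (ε (t - (k + 1)) ω) with hYdef
  have hident_Y : ∀ k, IdentDistrib (Y k) (Y 0) μ μ := fun k =>
    (hidenteps _ _).comp hgmeas
  have hindep_Y : Pairwise (Function.onFun (IndepFun · · μ) Y) := fun i j hij =>
    (hnoise.indep_eps.indepFun (show t - ((i : ℤ) + 1) ≠ t - ((j : ℤ) + 1) by omega)).comp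
      hgmeas hgmeas
  have hint_Y : Integrable (Y 0) μ :=
    ((hidenteps (t - ((0 : ℕ) + 1)) 0).comp hgmeas).integrable_iff.2 heps
  have hlim_Y := strong_law_ae_real Y hint_Y hindep_Y hident_Y
  -- almost sure assembly
  filter_upwards [hlim_e, hlim_o, hlim_Y] with ω he ho hy
  -- first, the noise term is sublinear
  have htend1 : Tendsto (fun n : ℕ => ((n : ℝ) + 1) / n) atTop (𝓝 1) := by
    have h1 : Tendsto (fun n : ℕ => 1 + 1 / (n : ℝ)) atTop (𝓝 (1 + 0)) :=
      tendsto_const_nhds.add tendsto_one_div_atTop_nhds_zero_nat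
    rw [add_zero] at h1
    refine h1.congr' ?_
    filter_upwards [eventually_ge_atTop 1] with n hn
    have hn0 : (0 : ℝ) < n := by exact_mod_cast hn
    field_simp
  have hy0 : Tendsto (fun n : ℕ => Y n ω / n) atTop (𝓝 0) := by
    have h1 : Tendsto (fun n : ℕ =>
        (∑ k ∈ Finset.range (n + 1), Y k ω) / (n + 1) * (((n : ℝ) + 1) / n)
          - (∑ k ∈ Finset.range n, Y k ω) / n) atTop (𝓝 (μ[Y 0] * 1 - μ[Y 0])) := by
      refine Tendsto.sub (Tendsto.mul ?_ htend1) hy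
      have h2 := hy.comp (tendsto_add_atTop_nat 1)
      refine Tendsto.congr (fun n => ?_) h2
      simp only [Function.comp]
      push_cast
      ring
    rw [mul_one, sub_self] at h1
    refine h1.congr' ?_
    filter_upwards [eventually_ge_atTop 1] with n hn
    have hn0 : (0 : ℝ) < n := by exact_mod_cast hn
    have hn1 : ((n : ℝ) + 1) ≠ 0 := by positivity
    rw [Finset.sum_range_succ]
    field_simp
    ring
  have hYev : ∀ᶠ k in atTop, Y k ω ≤ δ * k := by
    filter_upwards [hy0.eventually_lt_const hδpos, eventually_ge_atTop 1] with k hk hk1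
    have hk0 : (0 : ℝ) < k := by exact_mod_cast hk1
    rw [div_lt_iff₀ hk0] at hk
    linarith
  -- the even and odd partial sums are eventually bounded
  have heev : ∀ᶠ n in atTop, ∑ i ∈ Finset.range n, Xe i ω ≤ c * n := by
    filter_upwards [he.eventually_lt_const hmc, eventually_ge_atTop 1] with n hn hn1
    have hn0 : (0 : ℝ) < n := by exact_mod_cast hn1
    rw [div_lt_iff₀ hn0] at hn
    linarith
  have hoev : ∀ᶠ n in atTop, ∑ i ∈ Finset.range n, Xo i ω ≤ c * n := by
    filter_upwards [ho.eventually_lt_const hmc, eventually_ge_atTop 1] with n hn hn1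
    have hn0 : (0 : ℝ) < n := by exact_mod_cast hn1
    rw [div_lt_iff₀ hn0] at hn
    linarith
  obtain ⟨N1, hN1⟩ := eventually_atTop.1 heev
  obtain ⟨N2, hN2⟩ := eventually_atTop.1 hoev
  -- key eventual bound for the full log-sums
  set L : ℕ → ℝ := fun ℓ => Real.log ‖Amat θ α η (t - (ℓ : ℤ)) ω‖ with hL
  have hkey : ∀ᶠ k in atTop, ∑ ℓ ∈ Finset.range (k + 1), L ℓ ≤ c * ((k : ℝ) + 1) := by
    rw [eventually_atTop]
    refine ⟨2 * N1 + 2 * N2 + 2, fun k hk => ?_⟩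
    have hbound := sum_even_odd_le L (fun i => Xe i ω) (fun i => Xo i ω)
      (fun i => by
        simp only [hL, hXe]
        norm_cast)
      (fun i => by
        simp only [hL, hXo]
        have h1 : ((2 * i + 1 : ℕ) : ℤ) = 2 * (i : ℤ) + 1 := by push_cast; ring
        rw [h1]
        have h2 : t - (2 * (i : ℤ) + 1) = t - 2 * (i : ℤ) - 1 := by ring
        rw [h2])
      c N1 N2 hN1 hN2 (k + 1) (by omega)
    have hcast : ((k + 1 : ℕ) : ℝ) = (k : ℝ) + 1 := by push_cast; ring
    rw [hcast] at hbound
    exact hbound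
  -- comparison with a geometric series
  apply Summable.of_norm_bounded_eventually_nat
    (g := fun k => Real.exp c * Real.exp (c + δ) ^ k)
  · exact (summable_geometric_of_lt_one (Real.exp_pos _).le
      (by rw [Real.exp_lt_one_iff]; linarith)).mul_left _
  · filter_upwards [hkey, hYev] with k hsum hYk
    have hstep1 : ‖Aprod θ α η t (k + 1) ω *ᵥ Evec ε (t - (k + 1)) ω‖
        ≤ (∏ ℓ ∈ Finset.range (k + 1), ‖Amat θ α η (t - ℓ) ω‖) * |ε (t - (k + 1)) ω| :=
      term_norm_le t k ω
    have hstep2 : (∏ ℓ ∈ Finset.range (k + 1), ‖Amat θ α η (t - ℓ) ω‖)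
        ≤ Real.exp (∑ ℓ ∈ Finset.range (k + 1), L ℓ) :=
      prod_le_exp_sum_log _ _ (fun ℓ _ => norm_nonneg _)
    have hstep3 : |ε (t - (k + 1)) ω| ≤ Real.exp (Y k ω) :=
      abs_le_exp_maxlog _
    calc ‖Aprod θ α η t (k + 1) ω *ᵥ Evec ε (t - (k + 1)) ω‖
        ≤ (∏ ℓ ∈ Finset.range (k + 1), ‖Amat θ α η (t - ℓ) ω‖) * |ε (t - (k + 1)) ω| := hstep1
      _ ≤ Real.exp (∑ ℓ ∈ Finset.range (k + 1), L ℓ) * Real.exp (Y k ω) :=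
          mul_le_mul hstep2 hstep3 (abs_nonneg _)
            (le_of_lt (Real.exp_pos _))
      _ = Real.exp ((∑ ℓ ∈ Finset.range (k + 1), L ℓ) + Y k ω) := (Real.exp_add _ _).symm
      _ ≤ Real.exp (c * ((k : ℝ) + 1) + δ * k) :=
          Real.exp_le_exp.2 (add_le_add hsum hYk)
      _ = Real.exp c * Real.exp (c + δ) ^ k := by
          have harith : c * ((k : ℝ) + 1) + δ * k = c + (k : ℝ) * (c + δ) := by ring
          rw [harith, Real.exp_add, Real.exp_nat_mul]

end RCAR
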